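/- The law of the excluded middle x ∨ ¬x = 1 has finite satisfiability gap 1/3 among finite bounded commutative BCK-algebras: every such algebra either satisfies it identically or has excluded-middle degree at most 2/3. -/

import Mathlib

/-- A BCK-algebra: an algebra ⟨A; ·, 0⟩ satisfying (BCK1)–(BCK5). -/
class BCK (A : Type*) extends Zero A where
  op : A → A → A
  bck1 : ∀ x y z : A, op (op (op x y) (op x z)) (op z y) = 0
  bck2 : ∀ x y : A, op (op x (op x y)) y = 0
  bck3 : ∀ x : A, op x x = 0
  bck4 : ∀ x : A, op 0 x = 0
  bck5 : ∀ x y : A, op x y = 0 → op y x = 0 → x = y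

/-- A bounded BCK-algebra: a BCK-algebra with greatest element 1 (x·1 = 0 for all x). -/
class BoundedBCK (A : Type*) extends BCK A, One A where
  le_one : ∀ x : A, op x 1 = 0

namespace BCKProof

variable {A : Type*}

section Basic
variable [BCK A]

local infixl:70 " ⬝ " => BCK.op

lemma bk_ble_zero {x : A} (h : x ⬝ (0:A) = 0) : x = 0 := BCK.bck5 x 0 h (BCK.bck4 x)

lemma bk_op_zero (x : A) : x ⬝ (0:A) = x := by
  have h1 : (x ⬝ (x ⬝ (0:A))) ⬝ (0:A) = 0 := BCK.bck2 x 0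
  have h2 : x ⬝ (x ⬝ (0:A)) = 0 := bk_ble_zero h1
  have h3 : (x ⬝ (x ⬝ x)) ⬝ x = 0 := BCK.bck2 x x
  rw [BCK.bck3] at h3
  exact BCK.bck5 _ _ h3 h2

lemma bk_trans {x y z : A} (h1 : x ⬝ y = 0) (h2 : y ⬝ z = 0) : x ⬝ z = 0 := by
  have h := BCK.bck1 x z y
  rw [h1, bk_op_zero, h2, bk_op_zero] at h
  exact h

lemma bk_op_ble_self (x y : A) : (x ⬝ y) ⬝ x = 0 := by
  have h := BCK.bck1 x y 0
  rw [bk_op_zero, BCK.bck4, bk_op_zero] at h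
  exact h

lemma bk_ble_op_right {y z : A} (h : y ⬝ z = 0) (x : A) : (x ⬝ z) ⬝ (x ⬝ y) = 0 := by
  have h1 := BCK.bck1 x z y
  rw [h, bk_op_zero] at h1
  exact h1

lemma bk_op_comm' (x y z : A) : (x ⬝ y) ⬝ z = (x ⬝ z) ⬝ y := by
  have key : ∀ a b c : A, ((a ⬝ b) ⬝ c) ⬝ ((a ⬝ c) ⬝ b) = 0 := by
    intro a b c
    have h1 : (a ⬝ (a ⬝ c)) ⬝ c = 0 := BCK.bck2 a c
    have h2 : ((a ⬝ b) ⬝ c) ⬝ ((a ⬝ b) ⬝ (a ⬝ (a ⬝ c))) = 0 := bk_ble_op_right h1 (a ⬝ b)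
    have h3 : ((a ⬝ b) ⬝ (a ⬝ (a ⬝ c))) ⬝ ((a ⬝ c) ⬝ b) = 0 := BCK.bck1 a b (a ⬝ c)
    exact bk_trans h2 h3
  exact BCK.bck5 _ _ (key x y z) (key x z y)

lemma bk_op_ble_op (x y z : A) : ((x ⬝ z) ⬝ (y ⬝ z)) ⬝ (x ⬝ y) = 0 := by
  rw [bk_op_comm' (x ⬝ z) (y ⬝ z) (x ⬝ y)]
  exact BCK.bck1 x z y

lemma bk_ble_op_left {x y : A} (h : x ⬝ y = 0) (z : A) : (x ⬝ z) ⬝ (y ⬝ z) = 0 := by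
  have h2 := bk_op_ble_op x y z
  rw [h, bk_op_zero] at h2
  exact h2

end Basic

section Bdd
variable [BoundedBCK A]
local infixl:70 " ⬝ " => BCK.op

lemma bk_neg_neg (hcomm : ∀ x y : A, y ⬝ (y ⬝ x) = x ⬝ (x ⬝ y)) (x : A) :
    (1:A) ⬝ ((1:A) ⬝ x) = x := by
  have h := hcomm x 1
  rw [BoundedBCK.le_one, bk_op_zero] at h
  exact h

lemma bk_demorgan (hcomm : ∀ x y : A, y ⬝ (y ⬝ x) = x ⬝ (x ⬝ y)) (x y : A) :
    ((1:A) ⬝ x) ⬝ ((1:A) ⬝ y) = y ⬝ x := by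
  have h1 : (((1:A) ⬝ x) ⬝ ((1:A) ⬝ y)) ⬝ (y ⬝ x) = 0 := BCK.bck1 1 x y
  have h2 : (((1:A) ⬝ ((1:A) ⬝ y)) ⬝ ((1:A) ⬝ ((1:A) ⬝ x))) ⬝ (((1:A) ⬝ x) ⬝ ((1:A) ⬝ y)) = 0 :=
    BCK.bck1 1 ((1:A) ⬝ y) ((1:A) ⬝ x)
  rw [bk_neg_neg hcomm, bk_neg_neg hcomm] at h2
  exact BCK.bck5 _ _ h1 h2

lemma bk_meet_glb (hcomm : ∀ x y : A, y ⬝ (y ⬝ x) = x ⬝ (x ⬝ y)) {w x y : A}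
    (h1 : w ⬝ x = 0) (h2 : w ⬝ y = 0) : w ⬝ (y ⬝ (y ⬝ x)) = 0 := by
  have hw : y ⬝ (y ⬝ w) = w := by rw [hcomm w y, h2, bk_op_zero]
  have s1 : (y ⬝ x) ⬝ (y ⬝ w) = 0 := bk_ble_op_right h1 y
  have s2 : (y ⬝ (y ⬝ w)) ⬝ (y ⬝ (y ⬝ x)) = 0 := bk_ble_op_right s1 y
  rw [hw] at s2
  exact s2

lemma bk_F1core (hcomm : ∀ x y : A, y ⬝ (y ⬝ x) = x ⬝ (x ⬝ y)) {c z : A} (h : c ⬝ z = 0) :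
    ((1:A) ⬝ (z ⬝ c)) ⬝ c = (1:A) ⬝ z := by
  have hp : ((1:A) ⬝ z) ⬝ ((1:A) ⬝ c) = 0 := bk_ble_op_right h 1
  have e1 : z ⬝ c = ((1:A) ⬝ c) ⬝ ((1:A) ⬝ z) := (bk_demorgan hcomm c z).symm
  have e2 : ((1:A) ⬝ (z ⬝ c)) ⬝ c
      = ((1:A) ⬝ (((1:A) ⬝ c) ⬝ ((1:A) ⬝ z))) ⬝ ((1:A) ⬝ ((1:A) ⬝ c)) := by
    rw [bk_neg_neg hcomm, ← e1]
  rw [e2, bk_demorgan hcomm, hcomm ((1:A) ⬝ z) ((1:A) ⬝ c), hp, bk_op_zero]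

lemma bk_recover (hcomm : ∀ x y : A, y ⬝ (y ⬝ x) = x ⬝ (x ⬝ y)) {c z : A} (h : c ⬝ z = 0) :
    (1:A) ⬝ (((1:A) ⬝ (z ⬝ c)) ⬝ c) = z := by
  rw [bk_F1core hcomm h, bk_neg_neg hcomm]

lemma bk_boolean_neg_op (hcomm : ∀ x y : A, y ⬝ (y ⬝ x) = x ⬝ (x ⬝ y)) {x : A}
    (hb : x ⬝ (x ⬝ ((1:A) ⬝ x)) = 0) : ((1:A) ⬝ x) ⬝ x = (1:A) ⬝ x := by
  have h1 : ((1:A) ⬝ x) ⬝ (((1:A) ⬝ x) ⬝ x) = 0 := by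
    rw [hcomm x ((1:A) ⬝ x)]; exact hb
  have h2 : (((1:A) ⬝ x) ⬝ x) ⬝ ((1:A) ⬝ x) = 0 := bk_op_ble_self _ _
  exact BCK.bck5 _ _ h2 h1

lemma bk_c_le_op (hcomm : ∀ x y : A, y ⬝ (y ⬝ x) = x ⬝ (x ⬝ y)) {c x : A}
    (hcnc : c ⬝ ((1:A) ⬝ c) = 0) (hcx : c ⬝ x = 0)
    (hbx : x ⬝ (x ⬝ ((1:A) ⬝ x)) = 0) : c ⬝ (x ⬝ c) = 0 := by
  have e0 : ((1:A) ⬝ (((1:A) ⬝ c) ⬝ c)) ⬝ c = c := by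
    have h := bk_F1core hcomm hcnc
    rw [bk_neg_neg hcomm] at h; exact h
  have hxx : (1:A) ⬝ (((1:A) ⬝ x) ⬝ x) = x := by
    rw [bk_boolean_neg_op hcomm hbx, bk_neg_neg hcomm]
  have hnn : ((1:A) ⬝ x) ⬝ ((1:A) ⬝ c) = 0 := bk_ble_op_right hcx 1
  have t1 : (((1:A) ⬝ x) ⬝ x) ⬝ (((1:A) ⬝ c) ⬝ x) = 0 := bk_ble_op_left hnn x
  have t2 : (((1:A) ⬝ c) ⬝ x) ⬝ (((1:A) ⬝ c) ⬝ c) = 0 := bk_ble_op_right hcx ((1:A) ⬝ c)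
  have t3 := bk_trans t1 t2
  have t4 : ((1:A) ⬝ (((1:A) ⬝ c) ⬝ c)) ⬝ ((1:A) ⬝ (((1:A) ⬝ x) ⬝ x)) = 0 := bk_ble_op_right t3 1
  rw [hxx] at t4
  have t5 := bk_ble_op_left t4 c
  rw [e0] at t5
  exact t5

lemma bk_op_neg_ble (x c : A) : (x ⬝ ((1:A) ⬝ c)) ⬝ c = 0 := by
  rw [bk_op_comm' x ((1:A) ⬝ c) c]
  have h := bk_op_ble_op x 1 c
  rw [BoundedBCK.le_one, bk_op_zero] at h
  exact h

end Bdd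

end BCKProof

open BCKProof

/-- The law of the excluded middle x ∨ ¬x = 1 has finite satisfiability gap 1/3
among finite bounded commutative BCK-algebras: every such algebra either
satisfies it identically or has excluded-middle degree at most 2/3. -/
theorem stmt_11 (A : Type*) [BoundedBCK A] [Fintype A]
    (hcomm : ∀ x y : A, BCK.op y (BCK.op y x) = BCK.op x (BCK.op x y)) :
    let neg : A → A := fun x => BCK.op 1 x
    let meet : A → A → A := fun a b => BCK.op b (BCK.op b a)
    let join : A → A → A := fun a b => neg (meet (neg a) (neg b))
    (∀ x : A, join x (neg x) = 1) ∨
      ((Nat.card {x : A // join x (neg x) = 1} : ℚ) / (Fintype.card A : ℚ)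
        ≤ 2 / 3) := by
  intro neg meet join
  by_cases hall : ∀ x : A, join x (neg x) = 1
  · exact Or.inl hall
  right
  classical
  have hiff : ∀ x : A, (join x (neg x) = 1) ↔ BCK.op x (BCK.op x (BCK.op 1 x)) = 0 := by
    intro x
    show BCK.op 1 (BCK.op (BCK.op 1 (BCK.op 1 x))
        (BCK.op (BCK.op 1 (BCK.op 1 x)) (BCK.op 1 x))) = 1 ↔ _
    rw [bk_neg_neg hcomm]
    constructor
    · intro h
      have h2 : BCK.op 1 (BCK.op 1 (BCK.op x (BCK.op x (BCK.op 1 x)))) = BCK.op 1 1 := by rw [h]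
      rw [bk_neg_neg hcomm, BCK.bck3] at h2
      exact h2
    · intro h; rw [h, bk_op_zero]
  push_neg at hall
  obtain ⟨a, ha⟩ := hall
  have hPa : BCK.op a (BCK.op a (BCK.op 1 a)) ≠ 0 := fun h => ha ((hiff a).2 h)
  obtain ⟨c0, hc0ne, hc0nc0⟩ : ∃ c0 : A, c0 ≠ 0 ∧ BCK.op c0 (BCK.op 1 c0) = 0 := by
    refine ⟨BCK.op a (BCK.op a (BCK.op 1 a)), hPa, ?_⟩
    have h0 : BCK.op (BCK.op a (BCK.op a (BCK.op 1 a))) a = 0 := bk_op_ble_self _ _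
    have h1 : BCK.op (BCK.op a (BCK.op a (BCK.op 1 a))) (BCK.op 1 a) = 0 := BCK.bck2 a _
    have h2 : BCK.op (BCK.op 1 a) (BCK.op 1 (BCK.op a (BCK.op a (BCK.op 1 a)))) = 0 :=
      bk_ble_op_right h0 1
    exact bk_trans h1 h2
  letI : PartialOrder A :=
    { le := fun x y => BCK.op x y = 0
      le_refl := BCK.bck3
      le_trans := fun a b c hab hbc => bk_trans hab hbc
      le_antisymm := fun a b hab hba => BCK.bck5 a b hab hba }
  obtain ⟨c, hcmem, hcmin⟩ : ∃ m ∈ Finset.univ.filter (fun z : A => z ≠ 0 ∧ BCK.op z c0 = 0),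
      ∀ x ∈ Finset.univ.filter (fun z : A => z ≠ 0 ∧ BCK.op z c0 = 0), ¬ x < m := by
    obtain ⟨m, hm⟩ := Finset.exists_minimal
      (s := Finset.univ.filter (fun z : A => z ≠ 0 ∧ BCK.op z c0 = 0))
      ⟨c0, Finset.mem_filter.2 ⟨Finset.mem_univ _, hc0ne, BCK.bck3 c0⟩⟩
    exact ⟨m, hm.1, fun x hx hlt => hlt.not_ge (hm.2 hx hlt.le)⟩
  rw [Finset.mem_filter] at hcmem
  obtain ⟨-, hcne, hcc0⟩ := hcmem
  have hcnc : BCK.op c (BCK.op 1 c) = 0 := by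
    have h1 : BCK.op (BCK.op 1 c0) (BCK.op 1 c) = 0 := bk_ble_op_right hcc0 1
    exact bk_trans (bk_trans hcc0 hc0nc0) h1
  have hmin : ∀ z : A, BCK.op z c = 0 → z = 0 ∨ z = c := by
    intro z hz
    by_cases h0 : z = 0
    · exact Or.inl h0
    · right
      have hzT : z ∈ Finset.univ.filter (fun z : A => z ≠ 0 ∧ BCK.op z c0 = 0) :=
        Finset.mem_filter.2 ⟨Finset.mem_univ _, h0, bk_trans hz hcc0⟩
      have hnlt := hcmin z hzT
      by_contra hne
      exact hnlt (lt_of_le_of_ne hz hne)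
  have hdich : ∀ x : A, BCK.op x (BCK.op x (BCK.op 1 x)) = 0 → ¬ (BCK.op c x = 0) →
      BCK.op c (BCK.op 1 x) = 0 := by
    intro x hbx hcx
    have hm : BCK.op c (BCK.op c x) = 0 ∨ BCK.op c (BCK.op c x) = c :=
      hmin _ (bk_op_ble_self c (BCK.op c x))
    rcases hm with hm | hm
    · have l1 : BCK.op (BCK.op c (BCK.op 1 x)) c = 0 := bk_op_ble_self _ _
      have l2 : BCK.op (BCK.op c (BCK.op 1 x)) x = 0 := bk_op_neg_ble c x
      have l3 : BCK.op (BCK.op c (BCK.op 1 x)) (BCK.op c (BCK.op c x)) = 0 :=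
        bk_meet_glb hcomm l2 l1
      rw [hm, bk_op_zero] at l3
      exact l3
    · exfalso
      apply hcx
      have h := BCK.bck2 c x
      rw [hm] at h
      exact h
  have hmap1 : ∀ x : A, BCK.op x (BCK.op x (BCK.op 1 x)) = 0 → BCK.op c x = 0 →
      ¬ (join (BCK.op x c) (neg (BCK.op x c)) = 1) := by
    intro x hbx hcx
    rw [hiff]
    intro hP
    have m1 : BCK.op c (BCK.op x c) = 0 := bk_c_le_op hcomm hcnc hcx hbx
    have m2 : BCK.op c (BCK.op 1 (BCK.op x c)) = 0 := by
      have s1 : BCK.op (BCK.op x c) (BCK.op 1 c) = 0 := bk_ble_op_left (BoundedBCK.le_one x) c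
      have s2 : BCK.op (BCK.op 1 (BCK.op 1 c)) (BCK.op 1 (BCK.op x c)) = 0 := bk_ble_op_right s1 1
      rw [bk_neg_neg hcomm] at s2
      exact s2
    have m3 := bk_meet_glb hcomm m2 m1
    rw [hP, bk_op_zero] at m3
    exact hcne m3
  have hmap2 : ∀ x : A, BCK.op x (BCK.op x (BCK.op 1 x)) = 0 → BCK.op c (BCK.op 1 x) = 0 →
      ¬ (join (BCK.op 1 (BCK.op (BCK.op 1 x) c)) (neg (BCK.op 1 (BCK.op (BCK.op 1 x) c))) = 1) := by
    intro x hbx hcnx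
    rw [hiff]
    intro hP
    have hbnx : BCK.op (BCK.op 1 x) (BCK.op (BCK.op 1 x) (BCK.op 1 (BCK.op 1 x))) = 0 := by
      rw [bk_neg_neg hcomm, hcomm x (BCK.op 1 x)]
      exact hbx
    have m1 : BCK.op c (BCK.op (BCK.op 1 x) c) = 0 := bk_c_le_op hcomm hcnc hcnx hbnx
    have m2 : BCK.op c (BCK.op 1 (BCK.op 1 (BCK.op (BCK.op 1 x) c))) = 0 := by
      rw [bk_neg_neg hcomm]; exact m1
    have m3 : BCK.op c (BCK.op 1 (BCK.op (BCK.op 1 x) c)) = 0 := by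
      have s1 : BCK.op (BCK.op (BCK.op 1 x) c) (BCK.op 1 c) = 0 :=
        bk_ble_op_left (BoundedBCK.le_one (BCK.op 1 x)) c
      have s2 : BCK.op (BCK.op 1 (BCK.op 1 c)) (BCK.op 1 (BCK.op (BCK.op 1 x) c)) = 0 :=
        bk_ble_op_right s1 1
      rw [bk_neg_neg hcomm] at s2
      exact s2
    have m4 := bk_meet_glb hcomm m2 m3
    rw [hP, bk_op_zero] at m4
    exact hcne m4
  have hinj1 : ∀ x y : A, BCK.op c x = 0 → BCK.op c y = 0 → BCK.op x c = BCK.op y c → x = y := by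
    intro x y hx hy h
    have ex := bk_recover hcomm hx
    have ey := bk_recover hcomm hy
    rw [← ex, ← ey, h]
  have hinj2 : ∀ x y : A, BCK.op c (BCK.op 1 x) = 0 → BCK.op c (BCK.op 1 y) = 0 →
      BCK.op 1 (BCK.op (BCK.op 1 x) c) = BCK.op 1 (BCK.op (BCK.op 1 y) c) → x = y := by
    intro x y hx hy h
    have ex : BCK.op (BCK.op 1 (BCK.op (BCK.op 1 x) c)) c = x := by
      have h1 := bk_F1core hcomm hx
      rw [bk_neg_neg hcomm] at h1
      exact h1
    have ey : BCK.op (BCK.op 1 (BCK.op (BCK.op 1 y) c)) c = y := by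
      have h1 := bk_F1core hcomm hy
      rw [bk_neg_neg hcomm] at h1
      exact h1
    rw [← ex, ← ey, h]
  have key : Nat.card {x : A // join x (neg x) = 1} ≤
      2 * Nat.card {x : A // ¬ (join x (neg x) = 1)} := by
    obtain ⟨f, hf⟩ : ∃ f : {x : A // join x (neg x) = 1} →
        {x : A // ¬ (join x (neg x) = 1)} × Bool, Function.Injective f := by
      refine ⟨fun p => if h : BCK.op c p.1 = 0
        then (⟨BCK.op p.1 c, hmap1 p.1 ((hiff p.1).1 p.2) h⟩, true)
        else (⟨BCK.op 1 (BCK.op (BCK.op 1 p.1) c),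
          hmap2 p.1 ((hiff p.1).1 p.2) (hdich p.1 ((hiff p.1).1 p.2) h)⟩, false), ?_⟩
      intro p q hpq
      dsimp only at hpq
      by_cases hp : BCK.op c p.1 = 0 <;> by_cases hq : BCK.op c q.1 = 0
      · rw [dif_pos hp, dif_pos hq] at hpq
        have h1 : BCK.op p.1 c = BCK.op q.1 c := congrArg (fun z => (z.1.1 : A)) hpq
        exact Subtype.ext (hinj1 _ _ hp hq h1)
      · rw [dif_pos hp, dif_neg hq] at hpq
        simpa using congrArg Prod.snd hpq
      · rw [dif_neg hp, dif_pos hq] at hpq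
        simpa using congrArg Prod.snd hpq
      · rw [dif_neg hp, dif_neg hq] at hpq
        have h1 : BCK.op 1 (BCK.op (BCK.op 1 p.1) c) = BCK.op 1 (BCK.op (BCK.op 1 q.1) c) :=
          congrArg (fun z => (z.1.1 : A)) hpq
        exact Subtype.ext (hinj2 _ _ (hdich p.1 ((hiff p.1).1 p.2) hp)
          (hdich q.1 ((hiff q.1).1 q.2) hq) h1)
    calc Nat.card {x : A // join x (neg x) = 1}
        ≤ Nat.card ({x : A // ¬ (join x (neg x) = 1)} × Bool) :=
          Nat.card_le_card_of_injective f hf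
      _ = 2 * Nat.card {x : A // ¬ (join x (neg x) = 1)} := by
          rw [Nat.card_prod]
          simp [Nat.card_eq_fintype_card, mul_comm]
  have hsum : Nat.card {x : A // join x (neg x) = 1} +
      Nat.card {x : A // ¬ (join x (neg x) = 1)} = Fintype.card A := by
    rw [Nat.card_eq_fintype_card, Nat.card_eq_fintype_card, Fintype.card_subtype,
      Fintype.card_subtype]
    have h := Finset.card_filter_add_card_filter_not (s := (Finset.univ : Finset A))
      (fun x : A => join x (neg x) = 1)
    convert h using 2
    exact Finset.card_univ.symm
  have hN : 0 < Fintype.card A := Fintype.card_pos_iff.2 ⟨(0 : A)⟩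
  rw [div_le_div_iff₀ (by exact_mod_cast hN) (by norm_num)]
  have hnat : Nat.card {x : A // join x (neg x) = 1} * 3 ≤ 2 * Fintype.card A := by omega
  exact_mod_cast hnat
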